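/- Let g and ḡ be two inner products on a finite-dimensional real vector space V with ḡ ≥ g (i.e. ḡ(X,X) ≥ g(X,X) for all X). Then for every covariant 4-tensor T on V, the norm of T with respect to ḡ is at most the norm with respect to g: |T|_ḡ ≤ |T|_g. -/

import Mathlib

open Matrix

section Aux
open Finset

def Qform {β : Type*} [Fintype β] (w : β → β → ℝ) : Prop :=
  ∀ c : β → ℝ, 0 ≤ ∑ a, ∑ b, w a b * c a * c b

lemma q1 {n : ℕ} {H : Matrix (Fin n) (Fin n) ℝ} (hH : H.PosSemidef) (c : Fin n → ℝ) :
    0 ≤ ∑ i, ∑ j, H i j * c i * c j := by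
  have h := hH.dotProduct_mulVec_nonneg c
  simp only [star_trivial, dotProduct, mulVec, Finset.mul_sum] at h
  convert h using 1
  · rfl
  iterate 2 refine Finset.sum_congr rfl fun _ _ => ?_
  ring

lemma trace_nonneg {n : ℕ} {H : Matrix (Fin n) (Fin n) ℝ} (hH : H.PosSemidef)
    (M : Matrix (Fin n) (Fin n) ℝ) (hM : ∀ x : Fin n → ℝ, 0 ≤ ∑ i, ∑ j, x i * x j * M i j) :
    0 ≤ ∑ i, ∑ j, H i j * M i j := by
  obtain ⟨B, hB⟩ : ∃ B : Matrix (Fin n) (Fin n) ℝ, H = Bᴴ * B := by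
    open scoped MatrixOrder in exact CStarAlgebra.nonneg_iff_eq_star_mul_self.mp hH.nonneg
  have hent : ∀ i j, H i j = ∑ k, B k i * B k j := by
    intro i j
    rw [hB]
    simp [Matrix.mul_apply, conjTranspose_apply]
  calc (0:ℝ) ≤ ∑ k, ∑ i, ∑ j, B k i * B k j * M i j :=
        Finset.sum_nonneg fun k _ => hM (B k)
    _ = ∑ i, ∑ j, H i j * M i j := by
        rw [Finset.sum_comm]
        refine Finset.sum_congr rfl fun i _ => ?_
        rw [Finset.sum_comm]
        refine Finset.sum_congr rfl fun j _ => ?_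
        rw [hent, Finset.sum_mul]

lemma swap4 {n : ℕ} {β : Type*} [Fintype β] (x : Fin n → ℝ) (w : β → β → ℝ)
    (t : Fin n → β → ℝ) :
    ∑ i, ∑ j, x i * x j * (∑ a, ∑ b, w a b * t i a * t j b)
      = ∑ a, ∑ b, w a b * (∑ i, x i * t i a) * (∑ j, x j * t j b) := by
  simp only [Finset.mul_sum, Finset.sum_mul]
  -- LHS: ∑ i ∑ j ∑ a ∑ b ; RHS: ∑ a ∑ b ∑ i ∑ j (roughly)
  conv_lhs => enter [2, i]; rw [Finset.sum_comm]           -- i a j b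
  conv_lhs => rw [Finset.sum_comm]                   -- a i j b
  conv_lhs => enter [2, a, 2, i]; rw [Finset.sum_comm]     -- a i b j
  conv_lhs => enter [2, a]; rw [Finset.sum_comm]            -- a b i j
  conv_lhs => enter [2, a, 2, b]; rw [Finset.sum_comm]  -- a b j i
  iterate 4 refine Finset.sum_congr rfl fun _ _ => ?_
  ring

lemma step {n : ℕ} {β : Type*} [Fintype β] {H : Matrix (Fin n) (Fin n) ℝ}
    (hH : H.PosSemidef) {w : β → β → ℝ} (hw : Qform w) (t : Fin n → β → ℝ) :
    0 ≤ ∑ i, ∑ j, ∑ a, ∑ b, H i j * w a b * t i a * t j b := by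
  have key := trace_nonneg hH (fun i j => ∑ a, ∑ b, w a b * t i a * t j b) ?_
  · convert key using 1
    refine Finset.sum_congr rfl fun i _ => Finset.sum_congr rfl fun j _ => ?_
    simp only [Finset.mul_sum]
    iterate 2 refine Finset.sum_congr rfl fun _ _ => ?_
    ring
  · intro x
    rw [swap4 x w t]
    exact hw (fun a => ∑ i, x i * t i a)

lemma qstep {n : ℕ} {β : Type*} [Fintype β] {H : Matrix (Fin n) (Fin n) ℝ}
    (hH : H.PosSemidef) {w : β → β → ℝ} (hw : Qform w) :
    Qform (fun p q : Fin n × β => H p.1 q.1 * w p.2 q.2) := by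
  intro c
  have := step hH hw (fun i a => c (i, a))
  simp only [Fintype.sum_prod_type]
  -- goal order: i a j b ; step gives i j a b
  conv_rhs at this => enter [2, i]; rw [Finset.sum_comm]
  exact this

lemma qH {n : ℕ} {H : Matrix (Fin n) (Fin n) ℝ} (hH : H.PosSemidef) :
    Qform (fun i j => H i j) := fun c => q1 hH c

lemma nonneg4 {n : ℕ} {H₁ H₂ H₃ H₄ : Matrix (Fin n) (Fin n) ℝ}
    (h₁ : H₁.PosSemidef) (h₂ : H₂.PosSemidef) (h₃ : H₃.PosSemidef) (h₄ : H₄.PosSemidef)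
    (T : Fin n → Fin n → Fin n → Fin n → ℝ) :
    0 ≤ ∑ i₁, ∑ j₁, ∑ i₂, ∑ j₂, ∑ i₃, ∑ j₃, ∑ i₄, ∑ j₄,
      H₁ i₁ j₁ * H₂ i₂ j₂ * H₃ i₃ j₃ * H₄ i₄ j₄ * T i₁ i₂ i₃ i₄ * T j₁ j₂ j₃ j₄ := by
  have hq := qstep h₁ (qstep h₂ (qstep h₃ (qH h₄)))
  have this := hq (fun p => T p.1 p.2.1 p.2.2.1 p.2.2.2)
  simp only [Fintype.sum_prod_type] at this
  -- order: i₁ i₂ i₃ i₄ j₁ j₂ j₃ j₄  →  i₁ j₁ i₂ j₂ i₃ j₃ i₄ j₄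
  conv_rhs at this => enter [2, a, 2, b, 2, c]; rw [Finset.sum_comm]
  conv_rhs at this => enter [2, a, 2, b]; rw [Finset.sum_comm]
  conv_rhs at this => enter [2, a]; rw [Finset.sum_comm]
  conv_rhs at this => enter [2, a, 2, b, 2, c, 2, d]; rw [Finset.sum_comm]
  conv_rhs at this => enter [2, a, 2, b, 2, c]; rw [Finset.sum_comm]
  conv_rhs at this => enter [2, a, 2, b, 2, c, 2, d, 2, e]; rw [Finset.sum_comm]
  refine le_of_le_of_eq this ?_
  iterate 8 refine Finset.sum_congr rfl fun _ _ => ?_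
  ring

def S4 {n : ℕ} (H₁ H₂ H₃ H₄ : Matrix (Fin n) (Fin n) ℝ)
    (T : Fin n → Fin n → Fin n → Fin n → ℝ) : ℝ :=
  ∑ i₁, ∑ j₁, ∑ i₂, ∑ j₂, ∑ i₃, ∑ j₃, ∑ i₄, ∑ j₄,
    H₁ i₁ j₁ * H₂ i₂ j₂ * H₃ i₃ j₃ * H₄ i₄ j₄ * T i₁ i₂ i₃ i₄ * T j₁ j₂ j₃ j₄

lemma S4_nonneg {n : ℕ} {H₁ H₂ H₃ H₄ : Matrix (Fin n) (Fin n) ℝ}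
    (h₁ : H₁.PosSemidef) (h₂ : H₂.PosSemidef) (h₃ : H₃.PosSemidef) (h₄ : H₄.PosSemidef)
    (T : Fin n → Fin n → Fin n → Fin n → ℝ) : 0 ≤ S4 H₁ H₂ H₃ H₄ T :=
  nonneg4 h₁ h₂ h₃ h₄ T

lemma S4_add1 {n : ℕ} (X Y H₂ H₃ H₄ : Matrix (Fin n) (Fin n) ℝ) (T) :
    S4 (X + Y) H₂ H₃ H₄ T = S4 X H₂ H₃ H₄ T + S4 Y H₂ H₃ H₄ T := by
  unfold S4; simp only [Matrix.add_apply, add_mul, mul_add, Finset.sum_add_distrib]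

lemma S4_add2 {n : ℕ} (H₁ X Y H₃ H₄ : Matrix (Fin n) (Fin n) ℝ) (T) :
    S4 H₁ (X + Y) H₃ H₄ T = S4 H₁ X H₃ H₄ T + S4 H₁ Y H₃ H₄ T := by
  unfold S4; simp only [Matrix.add_apply, add_mul, mul_add, Finset.sum_add_distrib]

lemma S4_add3 {n : ℕ} (H₁ H₂ X Y H₄ : Matrix (Fin n) (Fin n) ℝ) (T) :
    S4 H₁ H₂ (X + Y) H₄ T = S4 H₁ H₂ X H₄ T + S4 H₁ H₂ Y H₄ T := by
  unfold S4; simp only [Matrix.add_apply, add_mul, mul_add, Finset.sum_add_distrib]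

lemma S4_add4 {n : ℕ} (H₁ H₂ H₃ X Y : Matrix (Fin n) (Fin n) ℝ) (T) :
    S4 H₁ H₂ H₃ (X + Y) T = S4 H₁ H₂ H₃ X T + S4 H₁ H₂ H₃ Y T := by
  unfold S4; simp only [Matrix.add_apply, add_mul, mul_add, Finset.sum_add_distrib]

lemma inv_quad_le {n : ℕ} {A : Matrix (Fin n) (Fin n) ℝ} (hA : A.PosDef) (x y : Fin n → ℝ) :
    2 * (y ⬝ᵥ x) - y ⬝ᵥ A *ᵥ y ≤ x ⬝ᵥ A⁻¹ *ᵥ x := by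
  have hdet : IsUnit A.det := hA.det_pos.ne'.isUnit
  have hAz : A *ᵥ (A⁻¹ *ᵥ x) = x := by
    rw [mulVec_mulVec, Matrix.mul_nonsing_inv _ hdet, one_mulVec]
  set z := A⁻¹ *ᵥ x with hz
  have hsymm : Aᵀ = A := hA.isHermitian
  have h0 := hA.posSemidef.dotProduct_mulVec_nonneg (z - y)
  simp only [star_trivial] at h0
  have e1 : z ⬝ᵥ A *ᵥ y = x ⬝ᵥ y := by
    rw [dotProduct_mulVec, ← mulVec_transpose, hsymm, hAz]
  have e2 : z ⬝ᵥ x = x ⬝ᵥ A⁻¹ *ᵥ x := dotProduct_comm _ _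
  rw [Matrix.mulVec_sub, sub_dotProduct, dotProduct_sub, dotProduct_sub, hAz] at h0
  have e3 : y ⬝ᵥ x = x ⬝ᵥ y := dotProduct_comm _ _
  linarith [h0, e1, e2, e3]

lemma inv_antitone {n : ℕ} {G Gbar : Matrix (Fin n) (Fin n) ℝ}
    (hG : G.PosDef) (hGbar : Gbar.PosDef)
    (hle : ∀ x : Fin n → ℝ, x ⬝ᵥ G.mulVec x ≤ x ⬝ᵥ Gbar.mulVec x) (x : Fin n → ℝ) :
    x ⬝ᵥ Gbar⁻¹ *ᵥ x ≤ x ⬝ᵥ G⁻¹ *ᵥ x := by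
  have hdet : IsUnit Gbar.det := hGbar.det_pos.ne'.isUnit
  have hy : Gbar *ᵥ (Gbar⁻¹ *ᵥ x) = x := by
    rw [mulVec_mulVec, Matrix.mul_nonsing_inv _ hdet, one_mulVec]
  set y := Gbar⁻¹ *ᵥ x with hydef
  have key := inv_quad_le hG x y
  have h1 : y ⬝ᵥ x = x ⬝ᵥ Gbar⁻¹ *ᵥ x := dotProduct_comm _ _
  have h2 : y ⬝ᵥ Gbar *ᵥ y = x ⬝ᵥ Gbar⁻¹ *ᵥ x := by rw [hy]; exact dotProduct_comm _ _
  have h3 := hle y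
  linarith

lemma diff_posSemidef {n : ℕ} {G Gbar : Matrix (Fin n) (Fin n) ℝ}
    (hG : G.PosDef) (hGbar : Gbar.PosDef)
    (hle : ∀ x : Fin n → ℝ, x ⬝ᵥ G.mulVec x ≤ x ⬝ᵥ Gbar.mulVec x) :
    (G⁻¹ - Gbar⁻¹).PosSemidef := by
  refine PosSemidef.of_dotProduct_mulVec_nonneg (hG.inv.isHermitian.sub hGbar.inv.isHermitian) fun x => ?_
  simp only [star_trivial, Matrix.sub_mulVec, dotProduct_sub]
  exact sub_nonneg.mpr (inv_antitone hG hGbar hle x)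

end Aux

/-- The squared norm of a covariant 4-tensor `T` with respect to the (inverse) metric `H`:
`|T|² = H^{i₁j₁} H^{i₂j₂} H^{i₃j₃} H^{i₄j₄} T_{i₁i₂i₃i₄} T_{j₁j₂j₃j₄}`. -/
def normSq4 {n : ℕ} (H : Matrix (Fin n) (Fin n) ℝ)
    (T : Fin n → Fin n → Fin n → Fin n → ℝ) : ℝ :=
  ∑ i₁, ∑ j₁, ∑ i₂, ∑ j₂, ∑ i₃, ∑ j₃, ∑ i₄, ∑ j₄,
    H i₁ j₁ * H i₂ j₂ * H i₃ j₃ * H i₄ j₄ * T i₁ i₂ i₃ i₄ * T j₁ j₂ j₃ j₄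

/-- If `g` and `ḡ` are inner products with `ḡ ≥ g`, then for every covariant 4-tensor `T`,
`|T|_ḡ ≤ |T|_g` (norms computed by contracting with the inverse metrics). -/
theorem stmt_2 {n : ℕ} (G Gbar : Matrix (Fin n) (Fin n) ℝ)
    (hG : G.PosDef) (hGbar : Gbar.PosDef)
    (hle : ∀ x : Fin n → ℝ, x ⬝ᵥ G.mulVec x ≤ x ⬝ᵥ Gbar.mulVec x)
    (T : Fin n → Fin n → Fin n → Fin n → ℝ) :
    Real.sqrt (normSq4 Gbar⁻¹ T) ≤ Real.sqrt (normSq4 G⁻¹ T) := by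

  have hApsd : (Gbar⁻¹).PosSemidef := hGbar.inv.posSemidef
  have hBpsd : (G⁻¹).PosSemidef := hG.inv.posSemidef
  set A := Gbar⁻¹ with hAdef
  set B := G⁻¹ with hBdef
  set D := B - A with hDdef
  have hDpsd : D.PosSemidef := diff_posSemidef hG hGbar hle
  have hBeq : B = A + D := by rw [hDdef]; abel
  have hADpsd : (A + D).PosSemidef := hBeq ▸ hBpsd
  have hmain : S4 A A A A T ≤ S4 (A + D) (A + D) (A + D) (A + D) T := by
    calc S4 A A A A T ≤ S4 (A + D) A A A T := by
          rw [S4_add1]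
          exact le_add_of_nonneg_right (S4_nonneg hDpsd hApsd hApsd hApsd T)
      _ ≤ S4 (A + D) (A + D) A A T := by
          rw [S4_add2]
          exact le_add_of_nonneg_right (S4_nonneg hADpsd hDpsd hApsd hApsd T)
      _ ≤ S4 (A + D) (A + D) (A + D) A T := by
          rw [S4_add3]
          exact le_add_of_nonneg_right (S4_nonneg hADpsd hADpsd hDpsd hApsd T)
      _ ≤ S4 (A + D) (A + D) (A + D) (A + D) T := by
          rw [S4_add4]
          exact le_add_of_nonneg_right (S4_nonneg hADpsd hADpsd hADpsd hDpsd T)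
  have hmain2 : normSq4 A T ≤ normSq4 B T := by
    rw [hBeq]
    exact hmain
  exact Real.sqrt_le_sqrt hmain2
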